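/- If X ∈ A^ω is not μ-normal, then there exists a μ-gambler 𝒢 with limsup_{n→∞} capital(𝒢, X[0..n]) = +∞; moreover 𝒢 wins at an infinitely-often exponential rate: limsup_n (log capital(𝒢, X[0..n]))/n > 0. -/

import Mathlib

open Filter Topology

/-- The prefix `X(0) X(1) ⋯ X(n-1)` of an infinite sequence, as a list. -/
def pref {A : Type*} (X : ℕ → A) (n : ℕ) : List A := (List.range n).map X

/-- Number of occurrences of the word `w` in the prefix `X[0..n]`
(indices `i` with `0 ≤ i ≤ n - |w| + 1`). -/
def nbocc {A : Type*} [DecidableEq A] (w : List A) (X : ℕ → A) (n : ℕ) : ℕ :=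
  ((Finset.range (n + 2 - w.length)).filter
    (fun i => (List.range w.length).map (fun j => X (i + j)) = w)).card

/-- Frequency of occurrences of `w` in `X[0..n]`. -/
noncomputable def freq {A : Type*} [DecidableEq A] (w : List A) (X : ℕ → A) (n : ℕ) : ℝ :=
  (nbocc w X n : ℝ) / ((n + 2 - w.length : ℕ) : ℝ)

/-- The Bernoulli measure of a word: product of the measures of its letters. -/
def wmeas {A : Type*} (μ : A → ℝ) (w : List A) : ℝ := (w.map μ).prod

/-- `X` is `μ`-normal: every nonempty word occurs with asymptotic frequency `μ(w)`. -/
def BNormal {A : Type*} [DecidableEq A] (μ : A → ℝ) (X : ℕ → A) : Prop :=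
  ∀ w : List A, w ≠ [] → Tendsto (fun n => freq w X n) atTop (𝓝 (wmeas μ w))

/-- Iterated transition function of a deterministic automaton. -/
def dstar {Q A : Type*} (δ : Q → A → Q) (q : Q) (w : List A) : Q := w.foldl δ q

/-- Capital of an automatic gambler started in state `q` after reading `w`. -/
def capital {Q A : Type*} (δ : Q → A → Q) (γ : Q → A → ℝ) : Q → List A → ℝ
  | _, [] => 1
  | q, a :: w => γ q a * capital δ γ (δ q a) w

set_option linter.unusedSectionVars false
set_option linter.unusedVariables false
set_option maxHeartbeats 1000000

section Aux
variable {A : Type*} [DecidableEq A]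

def cnd (X : ℕ → A) (K : ℕ) (u₀ : Fin K → A) (i : ℕ) : Prop :=
  K ≤ i ∧ ∀ j : Fin K, X (i + j - K) = u₀ j

instance (X : ℕ → A) (K : ℕ) (u₀ : Fin K → A) : DecidablePred (cnd X K u₀) := fun _ =>
  inferInstanceAs (Decidable (_ ∧ _))

def ccnt (X : ℕ → A) (K : ℕ) (u₀ : Fin K → A) (n : ℕ) : ℕ :=
  ((Finset.range n).filter (cnd X K u₀)).card

def mcnt (X : ℕ → A) (K : ℕ) (u₀ : Fin K → A) (a₀ : A) (n : ℕ) : ℕ :=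
  ((Finset.range n).filter (fun i => cnd X K u₀ i ∧ X i = a₀)).card

lemma mcnt_le_ccnt (X : ℕ → A) (K : ℕ) (u₀ : Fin K → A) (a₀ : A) (n : ℕ) :
    mcnt X K u₀ a₀ n ≤ ccnt X K u₀ n := by
  apply Finset.card_le_card
  intro i hi
  simp only [Finset.mem_filter] at hi ⊢
  exact ⟨hi.1, hi.2.1⟩

lemma card_shift (K n : ℕ) (Q : ℕ → Prop) [DecidablePred Q] :
    ((Finset.range n).filter (fun i => K ≤ i ∧ Q (i - K))).card
      = ((Finset.range (n - K)).filter Q).card := by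
  refine Finset.card_bij' (fun i _ => i - K) (fun i' _ => i' + K) ?_ ?_ ?_ ?_
  case _ =>
    intro a ha
    simp only [Finset.mem_filter, Finset.mem_range] at ha ⊢
    exact ⟨by omega, ha.2.2⟩
  case _ =>
    intro a ha
    simp only [Finset.mem_filter, Finset.mem_range] at ha ⊢
    refine ⟨by omega, by omega, ?_⟩
    have h2 : a + K - K = a := by omega
    rw [h2]
    exact ha.2
  case _ =>
    intro a ha
    simp only [Finset.mem_filter, Finset.mem_range] at ha
    show a - K + K = a
    omega
  case _ =>
    intro a ha
    show a + K - K = a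
    omega

lemma list_eq_iff (X : ℕ → A) (w : List A) (i : ℕ) :
    (List.range w.length).map (fun j => X (i + j)) = w
      ↔ ∀ j : Fin w.length, X (i + j) = w[j] := by
  constructor
  · intro h j
    have h2 := List.getElem_of_eq h
      (show (j:ℕ) < ((List.range w.length).map (fun j => X (i + j))).length by
        simp only [List.length_map, List.length_range]; exact j.2)
    simpa using h2
  · intro h
    apply List.ext_getElem
    · simp
    · intro j h1 h2
      simpa using h ⟨j, h2⟩

lemma mcnt_eq_nbocc (X : ℕ → A) (w : List A) (hw : w ≠ [])
    (u₀ : Fin (w.length - 1) → A)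
    (hu0 : ∀ j : Fin (w.length - 1), u₀ j = w[(j:ℕ)]'(by omega)) (n : ℕ) :
    mcnt X (w.length - 1) u₀ (w.getLast hw) (n + 1) = nbocc w X n := by
  have hk : 1 ≤ w.length := List.length_pos_iff.mpr hw
  unfold mcnt nbocc
  have hpred : ∀ i, (cnd X (w.length - 1) u₀ i ∧ X i = w.getLast hw)
      ↔ ((w.length - 1) ≤ i ∧
          (List.range w.length).map (fun j => X (i - (w.length - 1) + j)) = w) := by
    intro i
    rw [list_eq_iff]
    unfold cnd
    constructor
    · rintro ⟨⟨hKi, hcl⟩, hlast⟩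
      refine ⟨hKi, fun j => ?_⟩
      rcases lt_or_ge (j : ℕ) (w.length - 1) with hj | hj
      · have h3 := hcl ⟨(j:ℕ), hj⟩
        rw [hu0 ⟨(j:ℕ), hj⟩] at h3
        have harg : i - (w.length - 1) + (j:ℕ) = i + (j:ℕ) - (w.length - 1) := by omega
        rw [harg]
        exact h3
      · have harg : i - (w.length - 1) + (j:ℕ) = i := by omega
        rw [harg, hlast, List.getLast_eq_getElem]
        congr 1
        omega
    · rintro ⟨hKi, hall⟩
      refine ⟨⟨hKi, fun j => ?_⟩, ?_⟩
      · rw [hu0 j]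
        have h3 := hall ⟨(j:ℕ), by omega⟩
        have harg : i + (j:ℕ) - (w.length - 1) = i - (w.length - 1) + (j:ℕ) := by omega
        rw [harg]
        exact h3
      · have h3 := hall ⟨w.length - 1, by omega⟩
        have harg : i - (w.length - 1) + (w.length - 1) = i := by omega
        rw [harg] at h3
        rw [h3, List.getLast_eq_getElem]
        rfl
  have heq : ((Finset.range (n+1)).filter
        (fun i => cnd X (w.length - 1) u₀ i ∧ X i = w.getLast hw))
      = ((Finset.range (n+1)).filter
        (fun i => (w.length - 1) ≤ i ∧
          (List.range w.length).map (fun j => X (i - (w.length - 1) + j)) = w)) :=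
    Finset.filter_congr (fun i _ => hpred i)
  rw [heq,
    card_shift (w.length - 1) (n+1) (fun i' => (List.range w.length).map (fun j => X (i' + j)) = w)]
  have hr : n + 1 - (w.length - 1) = n + 2 - w.length := by omega
  rw [hr]

lemma ccnt_eq_nbocc (X : ℕ → A) (K : ℕ) (u₀ : Fin K → A) (v : List A)
    (hv : v.length = K) (hu0 : ∀ j : Fin K, u₀ j = v[(j:ℕ)]'(by omega)) (n : ℕ) :
    ccnt X K u₀ (n + 2) = nbocc v X n := by
  subst hv
  unfold ccnt nbocc
  have hpred : ∀ i, cnd X v.length u₀ i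
      ↔ (v.length ≤ i ∧ (List.range v.length).map (fun j => X (i - v.length + j)) = v) := by
    intro i
    rw [list_eq_iff]
    unfold cnd
    constructor
    · rintro ⟨hKi, hcl⟩
      refine ⟨hKi, fun j => ?_⟩
      have h3 := hcl j
      rw [hu0 j] at h3
      have harg : i - v.length + (j:ℕ) = i + (j:ℕ) - v.length := by omega
      rw [harg]
      exact h3
    · rintro ⟨hKi, hall⟩
      refine ⟨hKi, fun j => ?_⟩
      rw [hu0 j]
      have h3 := hall j
      have harg : i + (j:ℕ) - v.length = i - v.length + (j:ℕ) := by omega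
      rw [harg]
      exact h3
  have heq : ((Finset.range (n+2)).filter (cnd X v.length u₀))
      = ((Finset.range (n+2)).filter
        (fun i => v.length ≤ i ∧ (List.range v.length).map (fun j => X (i - v.length + j)) = v)) :=
    Finset.filter_congr (fun i _ => hpred i)
  rw [heq,
    card_shift v.length (n+2) (fun i' => (List.range v.length).map (fun j => X (i' + j)) = v)]

end Aux

lemma capital_append {Q A : Type*} (δ : Q → A → Q) (γ : Q → A → ℝ) :
    ∀ (l : List A) (q : Q) (a : A),
      capital δ γ q (l ++ [a]) = capital δ γ q l * γ (dstar δ q l) a := by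
  intro l
  induction l with
  | nil => intro q a; simp [capital, dstar]
  | cons b l ih =>
    intro q a
    simp only [List.cons_append, capital, List.append_eq]
    rw [ih (δ q b) a]
    have : dstar δ q (b :: l) = dstar δ (δ q b) l := rfl
    rw [this]
    ring

lemma capital_equiv {Q Q' A : Type*} (e : Q ≃ Q') (δ : Q → A → Q) (γ : Q → A → ℝ) :
    ∀ (l : List A) (q : Q),
      capital (fun q' a => e (δ (e.symm q') a)) (fun q' a => γ (e.symm q') a) (e q) l
        = capital δ γ q l := by
  intro l
  induction l with
  | nil => intro q; rfl
  | cons b l ih =>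
    intro q
    show γ (e.symm (e q)) b * capital _ _ (e (δ (e.symm (e q)) b)) l = γ q b * capital δ γ (δ q b) l
    rw [Equiv.symm_apply_apply]
    rw [ih (δ q b)]

def gdelta {A : Type*} (K : ℕ) : (Fin (K+1) × (Fin K → A)) → A → (Fin (K+1) × (Fin K → A)) :=
  fun s a => (⟨min (s.1.1 + 1) K, by omega⟩,
              fun j => if h : (j:ℕ) + 1 < K then s.2 ⟨(j:ℕ) + 1, h⟩ else a)

def ggamma {A : Type*} [DecidableEq A] (K : ℕ) (u₀ : Fin K → A) (a₀ : A) (f₁ f₂ : ℝ) :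
    (Fin (K+1) × (Fin K → A)) → A → ℝ :=
  fun s a => if s.1.1 = K ∧ s.2 = u₀ then (if a = a₀ then f₁ else f₂) else 1

def gq0 {A : Type*} (K : ℕ) (b : A) : Fin (K+1) × (Fin K → A) := (⟨0, by omega⟩, fun _ => b)

lemma pref_succ {A : Type*} (X : ℕ → A) (n : ℕ) : pref X (n+1) = pref X n ++ [X n] := by
  simp [pref, List.range_succ]

lemma gstate_spec {A : Type*} (X : ℕ → A) (K : ℕ) (b : A) (n : ℕ) :
    (dstar (gdelta K) (gq0 K b) (pref X n)).1.1 = min n K ∧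
    ∀ j : Fin K, K ≤ (j:ℕ) + n →
      (dstar (gdelta K) (gq0 K b) (pref X n)).2 j = X (n + (j:ℕ) - K) := by
  induction n with
  | zero =>
    constructor
    · simp [pref, dstar, gq0]
    · intro j hj
      exact absurd hj (by omega)
  | succ n ih =>
    rw [pref_succ]
    have hd : dstar (gdelta K) (gq0 K b) (pref X n ++ [X n])
        = gdelta K (dstar (gdelta K) (gq0 K b) (pref X n)) (X n) := by
      simp [dstar, List.foldl_append]
    rw [hd]
    constructor
    · show min ((dstar (gdelta K) (gq0 K b) (pref X n)).1.1 + 1) K = min (n+1) K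
      rw [ih.1]
      omega
    · intro j hj
      show (if h : (j:ℕ) + 1 < K then (dstar (gdelta K) (gq0 K b) (pref X n)).2 ⟨(j:ℕ)+1, h⟩
            else X n) = X (n + 1 + (j:ℕ) - K)
      split_ifs with h
      · rw [ih.2 ⟨(j:ℕ)+1, h⟩ (by simp; omega)]
        congr 1
        simp
        omega
      · congr 1
        have : (j:ℕ) < K := j.2
        omega

lemma gcapital_eq {A : Type*} [DecidableEq A] (X : ℕ → A) (K : ℕ) (u₀ : Fin K → A)
    (a₀ b : A) (f₁ f₂ : ℝ) (n : ℕ) :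
    capital (gdelta K) (ggamma K u₀ a₀ f₁ f₂) (gq0 K b) (pref X n)
      = ∏ i ∈ Finset.range n, (if cnd X K u₀ i then (if X i = a₀ then f₁ else f₂) else 1) := by
  induction n with
  | zero => simp [pref, capital]
  | succ n ih =>
    rw [pref_succ, capital_append, ih, Finset.prod_range_succ]
    congr 1
    have hs := gstate_spec X K b n
    show (if (dstar (gdelta K) (gq0 K b) (pref X n)).1.1 = K ∧
            (dstar (gdelta K) (gq0 K b) (pref X n)).2 = u₀
          then (if X n = a₀ then f₁ else f₂) else 1)
        = (if cnd X K u₀ n then (if X n = a₀ then f₁ else f₂) else 1)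
    have hcond : ((dstar (gdelta K) (gq0 K b) (pref X n)).1.1 = K ∧
        (dstar (gdelta K) (gq0 K b) (pref X n)).2 = u₀) ↔ cnd X K u₀ n := by
      unfold cnd
      constructor
      · rintro ⟨h1, h2⟩
        have hKn : K ≤ n := by rw [hs.1] at h1; omega
        refine ⟨hKn, fun j => ?_⟩
        rw [← hs.2 j (by omega), h2]
      · rintro ⟨hKn, hall⟩
        refine ⟨by rw [hs.1]; omega, ?_⟩
        funext j
        rw [hs.2 j (by omega), hall j]
    simp only [hcond]

lemma gcapital_pos {A : Type*} [DecidableEq A] (X : ℕ → A) (K : ℕ) (u₀ : Fin K → A)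
    (a₀ b : A) (f₁ f₂ : ℝ) (hf₁ : 0 < f₁) (hf₂ : 0 < f₂) (n : ℕ) :
    0 < capital (gdelta K) (ggamma K u₀ a₀ f₁ f₂) (gq0 K b) (pref X n) := by
  rw [gcapital_eq]
  apply Finset.prod_pos
  intro i _
  split_ifs <;> first | exact hf₁ | exact hf₂ | exact one_pos

lemma gcapital_log {A : Type*} [DecidableEq A] (X : ℕ → A) (K : ℕ) (u₀ : Fin K → A)
    (a₀ b : A) (f₁ f₂ : ℝ) (hf₁ : 0 < f₁) (hf₂ : 0 < f₂) (n : ℕ) :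
    Real.log (capital (gdelta K) (ggamma K u₀ a₀ f₁ f₂) (gq0 K b) (pref X n))
      = (mcnt X K u₀ a₀ n : ℝ) * Real.log f₁
        + ((ccnt X K u₀ n : ℝ) - (mcnt X K u₀ a₀ n : ℝ)) * Real.log f₂ := by
  rw [gcapital_eq, Real.log_prod]
  swap
  · intro i _
    split_ifs <;> positivity
  have hite : ∀ i, Real.log (if cnd X K u₀ i then (if X i = a₀ then f₁ else f₂) else 1)
      = (if cnd X K u₀ i then (if X i = a₀ then Real.log f₁ else Real.log f₂) else 0) := by
    intro i
    split_ifs <;> simp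
  simp_rw [hite]
  rw [← Finset.sum_filter, Finset.sum_ite, Finset.sum_const, Finset.sum_const,
      Finset.filter_filter, Finset.filter_filter]
  have h1 : ((Finset.range n).filter (fun i => cnd X K u₀ i ∧ X i = a₀)).card
      = mcnt X K u₀ a₀ n := rfl
  have h2 : ((Finset.range n).filter (fun i => cnd X K u₀ i ∧ ¬ X i = a₀)).card
      + mcnt X K u₀ a₀ n = ccnt X K u₀ n := by
    unfold mcnt ccnt
    rw [← Finset.filter_filter, ← Finset.filter_filter]
    rw [add_comm]
    exact Finset.card_filter_add_card_filter_not (fun i => X i = a₀)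
  rw [h1]
  have := congrArg (fun x : ℕ => (x : ℝ)) h2
  push_cast at this ⊢
  simp only [nsmul_eq_mul]
  linear_combination (Real.log f₂) * this

lemma gambler_exists {A : Type*} [Fintype A] [DecidableEq A] [Nonempty A]
    (μ : A → ℝ) (hμsum : ∑ a, μ a = 1)
    (X : ℕ → A) (K : ℕ) (u₀ : Fin K → A) (a₀ : A) (f₁ f₂ : ℝ)
    (hf₁ : 0 < f₁) (hf₂ : 0 < f₂)
    (hbal : μ a₀ * f₁ + (1 - μ a₀) * f₂ = 1)
    (c : ℝ) (hc : 0 < c)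
    (hfreq : ∃ᶠ n in atTop,
      c * n ≤ (mcnt X K u₀ a₀ n : ℝ) * Real.log f₁
            + ((ccnt X K u₀ n : ℝ) - (mcnt X K u₀ a₀ n : ℝ)) * Real.log f₂) :
    ∃ (m : ℕ) (δ : Fin m → A → Fin m) (qI : Fin m) (γ : Fin m → A → ℝ),
      (∀ q a, 0 ≤ γ q a) ∧ (∀ q, ∑ a, μ a * γ q a = 1) ∧
      Filter.limsup (fun n => ((capital δ γ qI (pref X n) : ℝ) : EReal)) atTop = ⊤ ∧
      0 < Filter.limsup
            (fun n => ((Real.log (capital δ γ qI (pref X n)) / n : ℝ) : EReal)) atTop := by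
  classical
  obtain ⟨b⟩ := ‹Nonempty A›
  let e : (Fin (K+1) × (Fin K → A)) ≃ Fin (Fintype.card (Fin (K+1) × (Fin K → A))) :=
    Fintype.equivFin _
  have hcap : ∀ l : List A,
      capital (fun q a => e (gdelta K (e.symm q) a))
        (fun q a => ggamma K u₀ a₀ f₁ f₂ (e.symm q) a) (e (gq0 K b)) l
      = capital (gdelta K) (ggamma K u₀ a₀ f₁ f₂) (gq0 K b) l :=
    fun l => capital_equiv e _ _ l _
  have hposn : ∀ n : ℕ,
      0 < capital (gdelta K) (ggamma K u₀ a₀ f₁ f₂) (gq0 K b) (pref X n) :=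
    fun n => gcapital_pos X K u₀ a₀ b f₁ f₂ hf₁ hf₂ n
  have hfreq' : ∃ᶠ n in atTop,
      c * n ≤ Real.log (capital (gdelta K) (ggamma K u₀ a₀ f₁ f₂) (gq0 K b) (pref X n)) := by
    apply hfreq.mono
    intro n hn
    rw [gcapital_log X K u₀ a₀ b f₁ f₂ hf₁ hf₂ n]
    exact hn
  refine ⟨Fintype.card (Fin (K+1) × (Fin K → A)),
    fun q a => e (gdelta K (e.symm q) a),
    e (gq0 K b),
    fun q a => ggamma K u₀ a₀ f₁ f₂ (e.symm q) a, ?_, ?_, ?_, ?_⟩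
  · intro q a
    dsimp only [ggamma]
    split_ifs <;> first | exact le_of_lt hf₁ | exact le_of_lt hf₂ | exact zero_le_one
  · intro q
    dsimp only [ggamma]
    by_cases h : ((e.symm q).1 : ℕ) = K ∧ (e.symm q).2 = u₀
    · simp only [if_pos h]
      have hterm : ∀ a : A, μ a * (if a = a₀ then f₁ else f₂)
          = μ a * f₂ + (if a = a₀ then μ a₀ * (f₁ - f₂) else 0) := by
        intro a
        split_ifs with ha
        · subst ha; ring
        · ring
      rw [Finset.sum_congr rfl (fun a _ => hterm a), Finset.sum_add_distrib,
          Finset.sum_ite_eq' Finset.univ a₀ (fun _ => μ a₀ * (f₁ - f₂)), ← Finset.sum_mul,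
          hμsum]
      simp only [Finset.mem_univ, if_pos]
      linarith [hbal]
    · simp only [if_neg h, mul_one]
      exact hμsum
  · -- limsup capital = ⊤
    simp only [hcap]
    rw [EReal.eq_top_iff_forall_lt]
    intro r
    have h1 : ((r+1:ℝ):EReal) ≤ Filter.limsup (fun n =>
        ((capital (gdelta K) (ggamma K u₀ a₀ f₁ f₂) (gq0 K b) (pref X n) : ℝ) : EReal)) atTop := by
      refine Filter.le_limsup_of_frequently_le ?_ (Filter.isBoundedUnder_of ⟨⊤, fun n => le_top⟩)
      have hev : ∀ᶠ n : ℕ in atTop, r + 1 ≤ c * n :=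
        (tendsto_natCast_atTop_atTop.const_mul_atTop hc).eventually_ge_atTop (r+1)
      apply (hfreq'.and_eventually hev).mono
      rintro n ⟨hn1, hn2⟩
      have hexp := Real.add_one_le_exp
        (Real.log (capital (gdelta K) (ggamma K u₀ a₀ f₁ f₂) (gq0 K b) (pref X n)))
      rw [Real.exp_log (hposn n)] at hexp
      have hle : r + 1 ≤ capital (gdelta K) (ggamma K u₀ a₀ f₁ f₂) (gq0 K b) (pref X n) := by
        linarith
      exact_mod_cast hle
    calc ((r:ℝ):EReal) < ((r+1:ℝ):EReal) := by exact_mod_cast lt_add_one r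
    _ ≤ _ := h1
  · -- limsup positive
    simp only [hcap]
    have h1 : ((c:ℝ):EReal) ≤ Filter.limsup (fun n =>
        ((Real.log (capital (gdelta K) (ggamma K u₀ a₀ f₁ f₂) (gq0 K b) (pref X n)) / n : ℝ)
          : EReal)) atTop := by
      refine Filter.le_limsup_of_frequently_le ?_ (Filter.isBoundedUnder_of ⟨⊤, fun n => le_top⟩)
      apply (hfreq'.and_eventually (eventually_gt_atTop 0)).mono
      rintro n ⟨hn1, hn2⟩
      have hn0 : (0:ℝ) < (n:ℝ) := by exact_mod_cast hn2
      have hle : c ≤ Real.log (capital (gdelta K) (ggamma K u₀ a₀ f₁ f₂) (gq0 K b) (pref X n)) / n :=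
        (le_div_iff₀ hn0).mpr (by linarith [hn1])
      exact_mod_cast hle
    have h0 : ((0:ℝ):EReal) < ((c:ℝ):EReal) := by exact_mod_cast hc
    calc (0:EReal) = ((0:ℝ):EReal) := by norm_num
    _ < _ := lt_of_lt_of_le h0 h1

noncomputable def dnm (K n : ℕ) : ℝ := ((n - K : ℕ) : ℝ)

lemma dnm_nonneg (K n : ℕ) : 0 ≤ dnm K n := Nat.cast_nonneg _

lemma dnm_large (K : ℕ) :
    ∀ᶠ n : ℕ in atTop, (1:ℝ) ≤ dnm K n ∧ (n:ℝ)/2 ≤ dnm K n := by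
  rw [eventually_atTop]
  refine ⟨2*K+2, fun n hn => ?_⟩
  unfold dnm
  rw [Nat.cast_sub (by omega)]
  have h1 : 2*(K:ℝ) + 2 ≤ (n:ℝ) := by exact_mod_cast hn
  have hK : (0:ℝ) ≤ (K:ℝ) := Nat.cast_nonneg K
  constructor <;> linarith

lemma log_lower₁ {u : ℝ} (hu : 0 ≤ u) : u - u^2 ≤ Real.log (1 + u) := by
  have h1 : (0:ℝ) < 1 + u := by linarith
  have h2 : Real.log (1+u)⁻¹ ≤ (1+u)⁻¹ - 1 := Real.log_le_sub_one_of_pos (by positivity)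
  rw [Real.log_inv] at h2
  have key : (u - u^2) * (1+u) ≤ u := by nlinarith [pow_nonneg hu 3]
  have h5 : u - u^2 ≤ u / (1+u) := (le_div_iff₀ h1).mpr key
  have h6 : u / (1+u) = 1 - (1+u)⁻¹ := by field_simp; ring
  linarith

lemma log_lower₂ {v : ℝ} (h0 : 0 ≤ v) (h2 : v ≤ 1/2) : -v - 2*v^2 ≤ Real.log (1 - v) := by
  have h1 : (0:ℝ) < 1 - v := by linarith
  have hlog : Real.log (1-v)⁻¹ ≤ (1-v)⁻¹ - 1 := Real.log_le_sub_one_of_pos (by positivity)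
  rw [Real.log_inv] at hlog
  have key : v ≤ (v + 2*v^2) * (1 - v) := by nlinarith [mul_nonneg (mul_self_nonneg v) (by linarith : (0:ℝ) ≤ 1 - 2*v)]
  have h5 : v / (1-v) ≤ v + 2*v^2 := (div_le_iff₀ h1).mpr key
  have h6 : (1-v)⁻¹ - 1 = v / (1-v) := by field_simp; ring
  linarith

lemma wmeas_cons {A : Type*} (μ : A → ℝ) (a : A) (l : List A) :
    wmeas μ (a :: l) = μ a * wmeas μ l := by simp [wmeas]

lemma wmeas_append {A : Type*} (μ : A → ℝ) (l₁ l₂ : List A) :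
    wmeas μ (l₁ ++ l₂) = wmeas μ l₁ * wmeas μ l₂ := by simp [wmeas]

lemma wmeas_pos {A : Type*} {μ : A → ℝ} (h : ∀ a, 0 < μ a) : ∀ v : List A, 0 < wmeas μ v
  | [] => by simp [wmeas]
  | a :: v => by rw [wmeas_cons]; exact mul_pos (h a) (wmeas_pos h v)

lemma wmeas_le_one {A : Type*} {μ : A → ℝ} (h0 : ∀ a, 0 < μ a) (h1 : ∀ a, μ a ≤ 1) :
    ∀ v : List A, wmeas μ v ≤ 1
  | [] => le_of_eq (by simp [wmeas])
  | a :: v => by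
      rw [wmeas_cons]
      have h2 := wmeas_le_one h0 h1 v
      nlinarith [wmeas_pos h0 v, h0 a, h1 a]

lemma ccnt_le {A : Type*} [DecidableEq A] (X : ℕ → A) (K : ℕ) (u : Fin K → A) (n : ℕ) :
    ccnt X K u n ≤ n - K := by
  unfold ccnt
  calc ((Finset.range n).filter (cnd X K u)).card
      ≤ (Finset.Ico K n).card := by
        apply Finset.card_le_card
        intro i hi
        simp only [Finset.mem_filter, Finset.mem_range] at hi
        rw [Finset.mem_Ico]
        exact ⟨hi.2.1, hi.1⟩
    _ = n - K := Nat.card_Ico K n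

lemma cbound_of_tendsto {A : Type*} [DecidableEq A] (X : ℕ → A) (K : ℕ) (u : Fin K → A)
    (P : ℝ) (hCtend : Filter.Tendsto (fun n => (ccnt X K u n : ℝ) / dnm K n) atTop (𝓝 P))
    (η : ℝ) (hη : 0 < η) :
    ∀ᶠ n : ℕ in atTop, ((ccnt X K u n : ℝ) ≤ (P + η) * dnm K n
        ∧ (P - η) * dnm K n ≤ (ccnt X K u n : ℝ)) := by
  have h1 := Metric.tendsto_nhds.mp hCtend η hη
  have h2 : ∀ᶠ n : ℕ in atTop, (1:ℝ) ≤ dnm K n := by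
    filter_upwards [(dnm_large K)] with n hn using hn.1
  filter_upwards [h1, h2] with n hn1 hn2
  rw [Real.dist_eq, abs_lt] at hn1
  have hD0 : (0:ℝ) < dnm K n := by linarith
  constructor
  · have := (div_lt_iff₀ hD0).mp
      (show (ccnt X K u n : ℝ)/dnm K n < P + η by linarith [hn1.2])
    linarith
  · have := (lt_div_iff₀ hD0).mp
      (show P - η < (ccnt X K u n : ℝ)/dnm K n by linarith [hn1.1])
    linarith

lemma winning_case_up {A : Type*} [Fintype A] [DecidableEq A] [Nonempty A]
    (μ : A → ℝ) (hμsum : ∑ a, μ a = 1)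
    (X : ℕ → A) (K : ℕ) (u₀ : Fin K → A) (a₀ : A)
    (hμ₀0 : 0 < μ a₀) (hμ₀1 : μ a₀ ≤ 1)
    (p P ε : ℝ) (hε : 0 < ε) (hp : p = P * μ a₀) (hp0 : 0 < p) (hP1 : P ≤ 1)
    (hCtend : Filter.Tendsto (fun n => (ccnt X K u₀ n : ℝ) / dnm K n) atTop (𝓝 P))
    (hMup : ∃ᶠ n in atTop, (p + ε) * dnm K n ≤ (mcnt X K u₀ a₀ n : ℝ)) :
    ∃ (m : ℕ) (δ : Fin m → A → Fin m) (qI : Fin m) (γ : Fin m → A → ℝ),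
      (∀ q a, 0 ≤ γ q a) ∧ (∀ q, ∑ a, μ a * γ q a = 1) ∧
      Filter.limsup (fun n => ((capital δ γ qI (pref X n) : ℝ) : EReal)) atTop = ⊤ ∧
      0 < Filter.limsup
            (fun n => ((Real.log (capital δ γ qI (pref X n)) / n : ℝ) : EReal)) atTop := by
  set μ₀ := μ a₀ with hμ₀def
  have hPle' : p + ε ≤ P := by
    refine le_of_forall_pos_le_add ?_
    intro η hη
    obtain ⟨n, hn1, hn2⟩ := (hMup.and_eventually
      ((cbound_of_tendsto X K u₀ P hCtend η hη).and (dnm_large K))).exists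
    obtain ⟨⟨hc1, _⟩, hD1, _⟩ := hn2
    have hMC : (mcnt X K u₀ a₀ n : ℝ) ≤ (ccnt X K u₀ n : ℝ) := by
      exact_mod_cast mcnt_le_ccnt X K u₀ a₀ n
    have hD0 : (0:ℝ) < dnm K n := by linarith
    exact le_of_mul_le_mul_right (hn1.trans (hMC.trans hc1)) hD0
  have hε6 : (0:ℝ) < ε/6 := by linarith
  set t := min (ε/6) (1/2) with htdef
  have ht0 : 0 < t := lt_min hε6 one_half_pos
  have ht6 : t ≤ ε/6 := min_le_left _ _
  have ht2 : t ≤ 1/2 := min_le_right _ _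
  set f₁ := 1 + t * (1 - μ₀) with hf₁def
  set f₂ := 1 - t * μ₀ with hf₂def
  have htμ₀0 : 0 ≤ t * μ₀ := mul_nonneg ht0.le hμ₀0.le
  have hμ₀u : t * μ₀ ≤ 1/2 := by nlinarith
  have ht1μ : 0 ≤ t * (1 - μ₀) := mul_nonneg ht0.le (by linarith)
  have hf₁1 : 1 ≤ f₁ := by rw [hf₁def]; linarith
  have hf₁0 : 0 < f₁ := by linarith
  have hf₂0 : 0 < f₂ := by rw [hf₂def]; linarith
  have hf₂1 : f₂ ≤ 1 := by rw [hf₂def]; linarith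
  set L₁ := Real.log f₁ with hL₁def
  set L₂ := Real.log f₂ with hL₂def
  have hL₁0 : 0 ≤ L₁ := Real.log_nonneg hf₁1
  have hL₂0 : L₂ ≤ 0 := Real.log_nonpos (by linarith) hf₂1
  have hL₁lb : t*(1-μ₀) - (t*(1-μ₀))^2 ≤ L₁ := by
    rw [hL₁def, hf₁def]; exact log_lower₁ ht1μ
  have hL₂lb : -(t*μ₀) - 2*(t*μ₀)^2 ≤ L₂ := by
    rw [hL₂def, hf₂def]; exact log_lower₂ htμ₀0 hμ₀u
  set φ := (p+ε)*L₁ + (P-p-ε)*L₂ with hφdef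
  have hB0 : 0 ≤ P - p - ε := by linarith
  have hA1 : p + ε ≤ 1 := by linarith
  have hB1 : P - p - ε ≤ 1 := by linarith
  have hφlb : t*ε/2 ≤ φ := by
    have e1 : (p+ε)*(t*(1-μ₀) - (t*(1-μ₀))^2) ≤ (p+ε)*L₁ :=
      mul_le_mul_of_nonneg_left hL₁lb (by linarith)
    have e2 : (P-p-ε)*(-(t*μ₀) - 2*(t*μ₀)^2) ≤ (P-p-ε)*L₂ :=
      mul_le_mul_of_nonneg_left hL₂lb hB0
    have e5 : (p+ε)*(t*(1-μ₀)) - (P-p-ε)*(t*μ₀) = t*ε := by linear_combination t * hp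
    have e3 : (p+ε)*(t*(1-μ₀)) - (t*(1-μ₀))^2 ≤ (p+ε)*(t*(1-μ₀) - (t*(1-μ₀))^2) := by
      nlinarith [sq_nonneg (t*(1-μ₀))]
    have e4 : -((P-p-ε)*(t*μ₀)) - 2*(t*μ₀)^2 ≤ (P-p-ε)*(-(t*μ₀) - 2*(t*μ₀)^2) := by
      nlinarith [sq_nonneg (t*μ₀)]
    have e6 : (t*(1-μ₀))^2 ≤ t^2 := by
      have h9 : t*(1-μ₀) ≤ t := by nlinarith [htμ₀0]
      exact pow_le_pow_left₀ ht1μ h9 2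
    have e7 : (t*μ₀)^2 ≤ t^2 := by
      have h9 : t*μ₀ ≤ t := by nlinarith [ht1μ]
      exact pow_le_pow_left₀ htμ₀0 h9 2
    have e8 : 3*t^2 ≤ t*ε/2 := by nlinarith [mul_nonneg ht0.le (by linarith : (0:ℝ) ≤ ε/6 - t)]
    linarith [e1, e2, e3, e4, e5, e6, e7, e8]
  have hφ0 : 0 < φ := by nlinarith [mul_pos ht0 hε]
  set η := φ / (2*(1 - L₂)) with hηdef
  have hden : (0:ℝ) < 1 - L₂ := by linarith
  have hη0 : 0 < η := div_pos hφ0 (by linarith)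
  have hηmul : η * (1 - L₂) = φ/2 := by
    rw [hηdef]; field_simp
  set c := φ/4 with hcdef
  have hc0 : 0 < c := by rw [hcdef]; linarith
  have hkey : ∃ᶠ n in atTop, c * n ≤ (mcnt X K u₀ a₀ n : ℝ) * L₁
      + ((ccnt X K u₀ n : ℝ) - (mcnt X K u₀ a₀ n : ℝ)) * L₂ := by
    apply (hMup.and_eventually
      ((cbound_of_tendsto X K u₀ P hCtend η hη0).and (dnm_large K))).mono
    rintro n ⟨h1, ⟨hc1, _⟩, hD1, hD2⟩
    have hD0 : (0:ℝ) ≤ dnm K n := dnm_nonneg K n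
    have s1 : (p+ε) * dnm K n * (L₁ - L₂) ≤ (mcnt X K u₀ a₀ n : ℝ) * (L₁ - L₂) :=
      mul_le_mul_of_nonneg_right h1 (by linarith)
    have s2 : ((P+η) * dnm K n) * L₂ ≤ (ccnt X K u₀ n : ℝ) * L₂ :=
      mul_le_mul_of_nonpos_right hc1 hL₂0
    have s5 : (p+ε) * dnm K n * (L₁ - L₂) + ((P+η) * dnm K n) * L₂
        = dnm K n * (φ + η * L₂) := by rw [hφdef]; ring
    have s3 : dnm K n * (φ/2) ≤ dnm K n * (φ + η*L₂) := by
      apply mul_le_mul_of_nonneg_left _ hD0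
      have : η * (-L₂) ≤ η * (1 - L₂) := mul_le_mul_of_nonneg_left (by linarith) hη0.le
      linarith [hηmul]
    have s4 : (n:ℝ)/2 * (φ/2) ≤ dnm K n * (φ/2) := mul_le_mul_of_nonneg_right hD2 (by linarith)
    have s6 : (mcnt X K u₀ a₀ n : ℝ) * L₁ + ((ccnt X K u₀ n : ℝ) - (mcnt X K u₀ a₀ n : ℝ)) * L₂
        = (mcnt X K u₀ a₀ n : ℝ) * (L₁ - L₂) + (ccnt X K u₀ n : ℝ) * L₂ := by ring
    have s7 : c * n = (n:ℝ)/2 * (φ/2) := by rw [hcdef]; ring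
    linarith [s1, s2, s3, s4, s5, s6, s7]
  have hbal : μ a₀ * f₁ + (1 - μ a₀) * f₂ = 1 := by
    rw [hf₁def, hf₂def]; ring
  exact gambler_exists μ hμsum X K u₀ a₀ f₁ f₂ hf₁0 hf₂0 hbal c hc0 hkey

lemma winning_case_down {A : Type*} [Fintype A] [DecidableEq A] [Nonempty A]
    (μ : A → ℝ) (hμsum : ∑ a, μ a = 1)
    (X : ℕ → A) (K : ℕ) (u₀ : Fin K → A) (a₀ : A)
    (hμ₀0 : 0 < μ a₀) (hμ₀1 : μ a₀ ≤ 1)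
    (p P ε : ℝ) (hε : 0 < ε) (hp : p = P * μ a₀) (hp0 : 0 < p) (hP0 : 0 < P) (hP1 : P ≤ 1)
    (hCtend : Filter.Tendsto (fun n => (ccnt X K u₀ n : ℝ) / dnm K n) atTop (𝓝 P))
    (hMdn : ∃ᶠ n in atTop, (mcnt X K u₀ a₀ n : ℝ) ≤ (p - ε) * dnm K n) :
    ∃ (m : ℕ) (δ : Fin m → A → Fin m) (qI : Fin m) (γ : Fin m → A → ℝ),
      (∀ q a, 0 ≤ γ q a) ∧ (∀ q, ∑ a, μ a * γ q a = 1) ∧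
      Filter.limsup (fun n => ((capital δ γ qI (pref X n) : ℝ) : EReal)) atTop = ⊤ ∧
      0 < Filter.limsup
            (fun n => ((Real.log (capital δ γ qI (pref X n)) / n : ℝ) : EReal)) atTop := by
  set μ₀ := μ a₀ with hμ₀def
  have hεp : ε ≤ p := by
    obtain ⟨n, h1, hD1, _⟩ := (hMdn.and_eventually (dnm_large K)).exists
    have hM0 : (0:ℝ) ≤ (mcnt X K u₀ a₀ n : ℝ) := Nat.cast_nonneg _
    by_contra hcon
    push_neg at hcon
    have h2 : (p - ε) * dnm K n ≤ (p - ε) * 1 :=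
      mul_le_mul_of_nonpos_left hD1 (by linarith)
    linarith
  have hpP : p ≤ P := by
    have := mul_le_mul_of_nonneg_left hμ₀1 hP0.le
    rw [mul_one] at this
    linarith [hp ▸ this]
  have hp1 : p ≤ 1 := hpP.trans hP1
  have hε8 : (0:ℝ) < ε/8 := by linarith
  set t := min (ε/8) (1/2) with htdef
  have ht0 : 0 < t := lt_min hε8 one_half_pos
  have ht8 : t ≤ ε/8 := min_le_left _ _
  have ht2 : t ≤ 1/2 := min_le_right _ _
  set f₁ := 1 - t * (1 - μ₀) with hf₁def
  set f₂ := 1 + t * μ₀ with hf₂def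
  have htμ₀0 : 0 ≤ t * μ₀ := mul_nonneg ht0.le hμ₀0.le
  have ht1μ0 : 0 ≤ t * (1 - μ₀) := mul_nonneg ht0.le (by linarith)
  have ht1μu : t * (1 - μ₀) ≤ 1/2 := by nlinarith
  have hf₁0 : 0 < f₁ := by rw [hf₁def]; linarith
  have hf₁1 : f₁ ≤ 1 := by rw [hf₁def]; linarith
  have hf₂1 : 1 ≤ f₂ := by rw [hf₂def]; linarith
  have hf₂0 : 0 < f₂ := by linarith
  set L₁ := Real.log f₁ with hL₁def
  set L₂ := Real.log f₂ with hL₂def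
  have hL₁0 : L₁ ≤ 0 := Real.log_nonpos (by linarith) hf₁1
  have hL₂0 : 0 ≤ L₂ := Real.log_nonneg hf₂1
  have hL₁lb : -(t*(1-μ₀)) - 2*(t*(1-μ₀))^2 ≤ L₁ := by
    rw [hL₁def, hf₁def]; exact log_lower₂ ht1μ0 ht1μu
  have hL₂lb : t*μ₀ - (t*μ₀)^2 ≤ L₂ := by
    rw [hL₂def, hf₂def]; exact log_lower₁ htμ₀0
  set φ := (p-ε)*L₁ + (P-p+ε)*L₂ with hφdef
  have hA0 : 0 ≤ p - ε := by linarith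
  have hA1 : p - ε ≤ 1 := by linarith
  have hB0 : 0 ≤ P - p + ε := by linarith
  have hB2 : P - p + ε ≤ 2 := by linarith
  have hφlb : t*ε/2 ≤ φ := by
    have e1 : (p-ε)*(-(t*(1-μ₀)) - 2*(t*(1-μ₀))^2) ≤ (p-ε)*L₁ :=
      mul_le_mul_of_nonneg_left hL₁lb hA0
    have e2 : (P-p+ε)*(t*μ₀ - (t*μ₀)^2) ≤ (P-p+ε)*L₂ :=
      mul_le_mul_of_nonneg_left hL₂lb hB0
    have e5 : (P-p+ε)*(t*μ₀) - (p-ε)*(t*(1-μ₀)) = t*ε := by linear_combination (-t) * hp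
    have e3 : -((p-ε)*(t*(1-μ₀))) - 2*(t*(1-μ₀))^2 ≤ (p-ε)*(-(t*(1-μ₀)) - 2*(t*(1-μ₀))^2) := by
      nlinarith [sq_nonneg (t*(1-μ₀))]
    have e4 : (P-p+ε)*(t*μ₀) - 2*(t*μ₀)^2 ≤ (P-p+ε)*(t*μ₀ - (t*μ₀)^2) := by
      nlinarith [sq_nonneg (t*μ₀)]
    have e6 : (t*(1-μ₀))^2 ≤ t^2 := by
      have h9 : t*(1-μ₀) ≤ t := by nlinarith [htμ₀0]
      exact pow_le_pow_left₀ ht1μ0 h9 2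
    have e7 : (t*μ₀)^2 ≤ t^2 := by
      have h9 : t*μ₀ ≤ t := by nlinarith [ht1μ0]
      exact pow_le_pow_left₀ htμ₀0 h9 2
    have e8 : 4*t^2 ≤ t*ε/2 := by nlinarith [mul_nonneg ht0.le (by linarith : (0:ℝ) ≤ ε/8 - t)]
    linarith [e1, e2, e3, e4, e5, e6, e7, e8]
  have hφ0 : 0 < φ := by nlinarith [mul_pos ht0 hε]
  set η := φ / (2*(1 + L₂)) with hηdef
  have hden : (0:ℝ) < 1 + L₂ := by linarith
  have hη0 : 0 < η := div_pos hφ0 (by linarith)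
  have hηmul : η * (1 + L₂) = φ/2 := by
    rw [hηdef]; field_simp
  set c := φ/4 with hcdef
  have hc0 : 0 < c := by rw [hcdef]; linarith
  have hkey : ∃ᶠ n in atTop, c * n ≤ (mcnt X K u₀ a₀ n : ℝ) * L₁
      + ((ccnt X K u₀ n : ℝ) - (mcnt X K u₀ a₀ n : ℝ)) * L₂ := by
    apply (hMdn.and_eventually
      ((cbound_of_tendsto X K u₀ P hCtend η hη0).and (dnm_large K))).mono
    rintro n ⟨h1, ⟨_, hc2⟩, hD1, hD2⟩
    have hD0 : (0:ℝ) ≤ dnm K n := dnm_nonneg K n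
    have s1 : (p-ε) * dnm K n * (L₁ - L₂) ≤ (mcnt X K u₀ a₀ n : ℝ) * (L₁ - L₂) :=
      mul_le_mul_of_nonpos_right h1 (by linarith)
    have s2 : ((P-η) * dnm K n) * L₂ ≤ (ccnt X K u₀ n : ℝ) * L₂ :=
      mul_le_mul_of_nonneg_right hc2 hL₂0
    have s5 : (p-ε) * dnm K n * (L₁ - L₂) + ((P-η) * dnm K n) * L₂
        = dnm K n * (φ - η * L₂) := by rw [hφdef]; ring
    have s3 : dnm K n * (φ/2) ≤ dnm K n * (φ - η*L₂) := by
      apply mul_le_mul_of_nonneg_left _ hD0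
      have : η * L₂ ≤ η * (1 + L₂) := mul_le_mul_of_nonneg_left (by linarith) hη0.le
      linarith [hηmul]
    have s4 : (n:ℝ)/2 * (φ/2) ≤ dnm K n * (φ/2) := mul_le_mul_of_nonneg_right hD2 (by linarith)
    have s6 : (mcnt X K u₀ a₀ n : ℝ) * L₁ + ((ccnt X K u₀ n : ℝ) - (mcnt X K u₀ a₀ n : ℝ)) * L₂
        = (mcnt X K u₀ a₀ n : ℝ) * (L₁ - L₂) + (ccnt X K u₀ n : ℝ) * L₂ := by ring
    have s7 : c * n = (n:ℝ)/2 * (φ/2) := by rw [hcdef]; ring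
    linarith [s1, s2, s3, s4, s5, s6, s7]
  have hbal : μ a₀ * f₁ + (1 - μ a₀) * f₂ = 1 := by
    rw [hf₁def, hf₂def]; ring
  exact gambler_exists μ hμsum X K u₀ a₀ f₁ f₂ hf₁0 hf₂0 hbal c hc0 hkey

/-- if `X` is not `μ`-normal, then some `μ`-gambler wins against `X`,
and it wins at an infinitely-often exponential rate. -/
theorem non_normal_implies_winning_gambler
    {A : Type*} [Fintype A] [DecidableEq A]
    (μ : A → ℝ) (hμpos : ∀ a, 0 < μ a) (hμsum : ∑ a, μ a = 1)
    (X : ℕ → A) (hX : ¬ BNormal μ X) :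
    ∃ (m : ℕ) (δ : Fin m → A → Fin m) (qI : Fin m) (γ : Fin m → A → ℝ),
      (∀ q a, 0 ≤ γ q a) ∧ (∀ q, ∑ a, μ a * γ q a = 1) ∧
      Filter.limsup (fun n => ((capital δ γ qI (pref X n) : ℝ) : EReal)) atTop = ⊤ ∧
      0 < Filter.limsup
            (fun n => ((Real.log (capital δ γ qI (pref X n)) / n : ℝ) : EReal)) atTop := by
  classical
  have hA : Nonempty A := by
    by_contra h
    rw [not_nonempty_iff] at h
    rw [Finset.univ_eq_empty, Finset.sum_empty] at hμsum
    exact absurd hμsum (by norm_num)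
  have hμle : ∀ a, μ a ≤ 1 := fun a => by
    rw [← hμsum]
    exact Finset.single_le_sum (fun b _ => (hμpos b).le) (Finset.mem_univ a)
  have hbad : ∃ kk : ℕ, ∃ w : List A, w.length = kk ∧ w ≠ [] ∧
      ¬ Filter.Tendsto (fun n => freq w X n) atTop (𝓝 (wmeas μ w)) := by
    unfold BNormal at hX
    push_neg at hX
    obtain ⟨w, hw1, hw2⟩ := hX
    exact ⟨w.length, w, rfl, hw1, hw2⟩
  obtain ⟨w, hwlen, hwne, hwnc⟩ := Nat.find_spec hbad
  have hmin : ∀ v : List A, v ≠ [] → v.length < Nat.find hbad →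
      Filter.Tendsto (fun n => freq v X n) atTop (𝓝 (wmeas μ v)) := by
    intro v hv hlt
    by_contra hnc
    exact Nat.find_min hbad hlt ⟨v, rfl, hv, hnc⟩
  have hk1 : 1 ≤ w.length := List.length_pos_iff.mpr hwne
  set K := w.length - 1 with hKdef
  set a₀ := w.getLast hwne with ha₀def
  have hu₀lt : ∀ j : Fin K, (j:ℕ) < w.length := fun j => by have := j.2; omega
  set u₀ : Fin K → A := fun j => w[(j:ℕ)]'(hu₀lt j) with hu₀def
  have hu : ∀ j : Fin K, u₀ j = w[(j:ℕ)]'(by omega) := fun j => rfl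
  set p := wmeas μ w with hpdef
  set P := wmeas μ (w.dropLast) with hPdef
  have hp0 : 0 < p := wmeas_pos hμpos w
  have hP0 : 0 < P := wmeas_pos hμpos _
  have hp1 : p ≤ 1 := wmeas_le_one hμpos hμle w
  have hP1 : P ≤ 1 := wmeas_le_one hμpos hμle _
  have hp : p = P * μ a₀ := by
    have hsplit := List.dropLast_append_getLast hwne
    calc p = wmeas μ (w.dropLast ++ [w.getLast hwne]) := by rw [hsplit]
    _ = P * μ a₀ := by
        have h1 : wmeas μ [w.getLast hwne] = μ (w.getLast hwne) := by simp [wmeas]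
        rw [wmeas_append, h1]
  have hfreqM : ∀ n, freq w X n = (mcnt X K u₀ a₀ (n+1) : ℝ) / dnm K (n+1) := by
    intro n
    unfold freq dnm
    rw [← mcnt_eq_nbocc X w hwne u₀ hu n]
    have hnum : n + 2 - w.length = (n+1) - K := by omega
    rw [hnum]
  have hCtend : Filter.Tendsto (fun n => (ccnt X K u₀ n : ℝ) / dnm K n) atTop (𝓝 P) := by
    by_cases hk2 : 2 ≤ w.length
    · have hw'len : (w.dropLast).length = K := by rw [List.length_dropLast]
      have hw'ne : w.dropLast ≠ [] := by
        intro h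
        rw [h] at hw'len
        simp only [List.length_nil] at hw'len
        omega
      have hw'lt : (w.dropLast).length < Nat.find hbad := by
        rw [hw'len]
        omega
      have hC0 := hmin (w.dropLast) hw'ne hw'lt
      have hcompat : ∀ j : Fin K, u₀ j = (w.dropLast)[(j:ℕ)]'(by omega) := by
        intro j
        rw [hu j]
        exact (List.getElem_dropLast (xs := w) (i := (j:ℕ)) (by have := j.2; omega)).symm
      have hCeq : ∀ n, (ccnt X K u₀ (n+2) : ℝ)/ dnm K (n+2) = freq (w.dropLast) X n := by
        intro n
        unfold freq dnm
        rw [ccnt_eq_nbocc X K u₀ (w.dropLast) hw'len hcompat n]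
        have hden : n + 2 - (w.dropLast).length = (n+2) - K := by rw [hw'len]
        rw [hden]
      have hC1 : Filter.Tendsto (fun n => (ccnt X K u₀ (n+2) : ℝ)/ dnm K (n+2)) atTop (𝓝 P) := by
        simp only [hCeq]
        exact hC0
      exact (Filter.tendsto_add_atTop_iff_nat 2).mp hC1
    · have hK0 : K = 0 := by omega
      have hccnt : ∀ n, ccnt X K u₀ n = n := by
        intro n
        unfold ccnt
        rw [Finset.filter_true_of_mem, Finset.card_range]
        intro i _
        exact ⟨by omega, fun j => absurd j.2 (by omega)⟩
      have hP1' : P = 1 := by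
        have hnil : w.dropLast = [] :=
          List.length_eq_zero_iff.mp (by rw [List.length_dropLast]; omega)
        rw [hPdef, hnil]
        simp [wmeas]
      rw [hP1']
      have hev : ∀ᶠ n : ℕ in atTop, (fun _ => (1:ℝ)) n = (ccnt X K u₀ n : ℝ)/dnm K n := by
        rw [eventually_atTop]
        refine ⟨1, fun n hn => ?_⟩
        rw [hccnt n]
        unfold dnm
        rw [hK0, Nat.sub_zero]
        exact (div_self (Nat.cast_ne_zero.mpr (by omega))).symm
      exact Filter.Tendsto.congr' hev tendsto_const_nhds
  rw [Metric.tendsto_atTop] at hwnc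
  push_neg at hwnc
  obtain ⟨ε, hε, hdev⟩ := hwnc
  have hdev2 : ∃ᶠ n in atTop, (p + ε ≤ freq w X n ∨ freq w X n ≤ p - ε) := by
    rw [Filter.frequently_atTop]
    intro N
    obtain ⟨n, hnN, hn⟩ := hdev N
    refine ⟨n, hnN, ?_⟩
    rw [Real.dist_eq] at hn
    rcases le_abs.mp hn with h | h
    · left; linarith
    · right; linarith
  rcases Filter.frequently_or_distrib.mp hdev2 with hup | hdn
  · have hMup : ∃ᶠ n in atTop, (p + ε) * dnm K n ≤ (mcnt X K u₀ a₀ n : ℝ) := by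
      rw [Filter.frequently_atTop] at hup ⊢
      intro N
      obtain ⟨n, hnN, hn⟩ := hup N
      refine ⟨n+1, by omega, ?_⟩
      rw [hfreqM n] at hn
      rcases eq_or_lt_of_le (dnm_nonneg K (n+1)) with h0 | h0
      · rw [← h0, div_zero] at hn
        linarith
      · exact (le_div_iff₀ h0).mp hn
    exact winning_case_up μ hμsum X K u₀ a₀ (hμpos a₀) (hμle a₀) p P ε hε hp hp0 hP1
      hCtend hMup
  · have hMdn : ∃ᶠ n in atTop, (mcnt X K u₀ a₀ n : ℝ) ≤ (p - ε) * dnm K n := by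
      rw [Filter.frequently_atTop] at hdn ⊢
      intro N
      obtain ⟨n, hnN, hn⟩ := hdn N
      refine ⟨n+1, by omega, ?_⟩
      rw [hfreqM n] at hn
      rcases eq_or_lt_of_le (dnm_nonneg K (n+1)) with h0 | h0
      · have h1 : mcnt X K u₀ a₀ (n+1) ≤ (n+1) - K :=
          (mcnt_le_ccnt X K u₀ a₀ (n+1)).trans (ccnt_le X K u₀ (n+1))
        have h2 : (n+1) - K = 0 := by
          have h3 : ((n+1 - K : ℕ) : ℝ) = 0 := h0.symm
          exact_mod_cast h3
        have h4 : mcnt X K u₀ a₀ (n+1) = 0 := by omega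
        rw [h4, ← h0]
        simp
      · exact (div_le_iff₀ h0).mp hn
    exact winning_case_down μ hμsum X K u₀ a₀ (hμpos a₀) (hμle a₀) p P ε hε hp hp0 hP0 hP1
      hCtend hMdn
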